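/- Let M be a nonempty finite set and let p be a probability mass function on M × M whose second marginal is uniform, i.e. p₂(l) = 1/|M| for every l ∈ M. Then for every function g : M × M → ℝ, ∑_{(m,l)∈M×M} p(m,l)·( g(m,l) − log ∑_{l'∈M} exp g(m,l') ) + log |M| ≤ I(p); equivalently, the expected softmax cross-entropy loss satisfies L_CE(g) ≥ log |M| − I(p). -/

import Mathlib

/-- For a pmf `p` on `M × M` with uniform second marginal, for every
critic `g`, the shifted negative softmax cross-entropy is a lower bound on the mutual
information `I(p)`; equivalently `L_CE(g) ≥ log |M| − I(p)`. -/
theorem softmax_crossEntropy_lower_bound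
    {M : Type*} [Fintype M] [Nonempty M]
    (p : M × M → ℝ)
    (hp0 : ∀ x, 0 ≤ p x)
    (hp1 : ∑ x : M × M, p x = 1)
    (hunif : ∀ l : M, ∑ m : M, p (m, l) = 1 / (Fintype.card M : ℝ))
    (g : M × M → ℝ) :
    (∑ x : M × M, p x * (g x - Real.log (∑ l' : M, Real.exp (g (x.1, l')))))
        + Real.log (Fintype.card M)
      ≤ ∑ x ∈ Finset.univ.filter (fun x : M × M => 0 < p x),
          p x * Real.log (p x /
            ((∑ b : M, p (x.1, b)) * (∑ a : M, p (a, x.2)))) := by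
  classical
  have hKpos : (0:ℝ) < (Fintype.card M : ℝ) := by exact_mod_cast Fintype.card_pos
  set Z : M → ℝ := fun m => ∑ l' : M, Real.exp (g (m, l')) with hZdef
  have hZpos : ∀ m, 0 < Z m := fun m =>
    Finset.sum_pos (fun l _ => Real.exp_pos _) Finset.univ_nonempty
  set p1 : M → ℝ := fun m => ∑ b : M, p (m, b) with hp1def
  set S := Finset.univ.filter (fun x : M × M => 0 < p x) with hSdef
  have hpS : ∀ x ∈ S, 0 < p x := fun x hx => (Finset.mem_filter.mp hx).2
  have hp1pos : ∀ x ∈ S, 0 < p1 x.1 := by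
    intro x hx
    exact Finset.sum_pos' (fun b _ => hp0 _)
      ⟨x.2, Finset.mem_univ _, hpS x hx⟩
  have hne : ∀ x : M × M, p x ≠ 0 → 0 < p x :=
    fun x h => lt_of_le_of_ne (hp0 x) (Ne.symm h)
  -- sum over S of p = 1
  have hsumS : ∑ x ∈ S, p x = 1 := by
    rw [hSdef, Finset.sum_filter_of_ne (fun x _ h => hne x h)]
    exact hp1
  -- restrict LHS sum to S
  have hrestrict : (∑ x : M × M, p x * (g x - Real.log (Z x.1)))
      = ∑ x ∈ S, p x * (g x - Real.log (Z x.1)) := by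
    rw [hSdef]
    refine (Finset.sum_filter_of_ne ?_).symm
    intro x _ h
    exact hne x fun h0 => h (by rw [h0, zero_mul])
  -- the softmax ratio
  set t : M × M → ℝ := fun x => Real.exp (g x) * p1 x.1 / (Z x.1 * p x) with htdef
  have hlogt : ∀ x ∈ S, g x - Real.log (Z x.1) - Real.log (p x) + Real.log (p1 x.1)
      = Real.log (t x) := by
    intro x hx
    rw [htdef]
    rw [Real.log_div (ne_of_gt (mul_pos (Real.exp_pos _) (hp1pos x hx)))
      (ne_of_gt (mul_pos (hZpos x.1) (hpS x hx))), Real.log_mul (Real.exp_ne_zero _)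
      (ne_of_gt (hp1pos x hx)), Real.log_mul (ne_of_gt (hZpos x.1)) (ne_of_gt (hpS x hx)),
      Real.log_exp]
    ring
  have htpos : ∀ x ∈ S, 0 < t x := by
    intro x hx
    have := hpS x hx; have := hp1pos x hx; have := hZpos x.1
    rw [htdef]; positivity
  -- Jensen
  have hjensen : ∑ x ∈ S, p x * Real.log (t x) ≤ Real.log (∑ x ∈ S, p x * t x) := by
    have := strictConcaveOn_log_Ioi.concaveOn.le_map_sum
      (t := S) (w := p) (p := t) (fun x hx => hp0 x) hsumS
      (fun x hx => Set.mem_Ioi.mpr (htpos x hx))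
    simpa [smul_eq_mul] using this
  -- compute the inner sum
  have hinner : ∑ x ∈ S, p x * t x = ∑ x ∈ S, Real.exp (g x) * p1 x.1 / Z x.1 := by
    refine Finset.sum_congr rfl fun x hx => ?_
    have hpx := ne_of_gt (hpS x hx)
    have hZx := ne_of_gt (hZpos x.1)
    rw [htdef]
    field_simp
  have hfull : ∑ x : M × M, Real.exp (g x) * p1 x.1 / Z x.1 = 1 := by
    rw [Fintype.sum_prod_type]
    have hm : ∀ m : M, ∑ l : M, Real.exp (g (m, l)) * p1 m / Z m = p1 m := by
      intro m
      rw [← Finset.sum_div, ← Finset.sum_mul]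
      rw [show (∑ l : M, Real.exp (g (m, l))) = Z m from rfl]
      exact mul_div_cancel_left₀ (p1 m) (ne_of_gt (hZpos m))
    show (∑ m : M, ∑ l : M, Real.exp (g (m, l)) * p1 m / Z m) = 1
    rw [Finset.sum_congr rfl fun m _ => hm m, hp1def, ← Fintype.sum_prod_type]
    exact hp1
  have hinner_le : ∑ x ∈ S, p x * t x ≤ 1 := by
    rw [hinner, ← hfull]
    refine Finset.sum_le_sum_of_subset_of_nonneg (Finset.filter_subset _ _) ?_
    intro x _ _
    have := hZpos x.1
    have : 0 ≤ p1 x.1 := Finset.sum_nonneg fun b _ => hp0 _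
    positivity
  have hinner_nonneg : 0 ≤ ∑ x ∈ S, p x * t x :=
    Finset.sum_nonneg fun x hx => le_of_lt (mul_pos (hpS x hx) (htpos x hx))
  have hkey : ∑ x ∈ S, p x * Real.log (t x) ≤ 0 :=
    hjensen.trans (Real.log_nonpos hinner_nonneg hinner_le)
  -- rewrite RHS
  have hRHS : ∀ x ∈ S, p x * Real.log (p x / ((∑ b : M, p (x.1, b)) * (∑ a : M, p (a, x.2))))
      = p x * (Real.log (p x) - Real.log (p1 x.1) + Real.log (Fintype.card M)) := by
    intro x hx
    congr 1
    rw [hunif x.2]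
    rw [show (∑ b : M, p (x.1, b)) = p1 x.1 from rfl]
    rw [Real.log_div (ne_of_gt (hpS x hx))
      (ne_of_gt (mul_pos (hp1pos x hx) (one_div_pos.mpr hKpos))),
      Real.log_mul (ne_of_gt (hp1pos x hx)) (one_div_ne_zero (ne_of_gt hKpos)),
      Real.log_div (one_ne_zero) (ne_of_gt hKpos), Real.log_one]
    ring
  rw [hrestrict, Finset.sum_congr rfl hRHS]
  have expand : ∑ x ∈ S, p x * (Real.log (p x) - Real.log (p1 x.1) + Real.log (Fintype.card M))
      = (∑ x ∈ S, p x * (Real.log (p x) - Real.log (p1 x.1))) + Real.log (Fintype.card M) := by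
    simp only [mul_add, Finset.sum_add_distrib, ← Finset.sum_mul, hsumS, one_mul]
  rw [expand]
  have : ∑ x ∈ S, p x * (g x - Real.log (Z x.1))
      ≤ ∑ x ∈ S, p x * (Real.log (p x) - Real.log (p1 x.1)) := by
    have h : (∑ x ∈ S, p x * (g x - Real.log (Z x.1)))
        - (∑ x ∈ S, p x * (Real.log (p x) - Real.log (p1 x.1)))
        = ∑ x ∈ S, p x * Real.log (t x) := by
      rw [← Finset.sum_sub_distrib]
      refine Finset.sum_congr rfl fun x hx => ?_
      rw [← hlogt x hx]; ring
    linarith [hkey, h]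
  linarith
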